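/- Let H be a finite simple 2-connected graph, let c_1, c_2, c_3 be distinct vertices of H, let s_4 be a vertex with s_4 ∉ {c_1, c_2, c_3}, and let x, y be two vertices such that H − {x, y} has exactly three connected components C_1, C_2, C_3 with c_i ∈ C_i for i = 1, 2, 3. Then there exist pairwise disjoint sets B_1, B_2, B_3, B_4 ⊆ V(H) with c_i ∈ B_i for i = 1,2,3 and s_4 ∈ B_4, such that each induced subgraph H[B_i] is connected, and such that for every pair of distinct indices i, j with {i, j} ≠ {2, 3}, the sets B_i and B_j are adjacent in H (i.e. some edge of H has one endpoint in B_i and one in B_j). -/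
import Mathlib


open SimpleGraph

/-- Two vertex sets are adjacent if some edge of `G` has one endpoint in each. -/
def SetsAdjacent {V : Type*} (G : SimpleGraph V) (X Y : Set V) : Prop :=
  ∃ x ∈ X, ∃ y ∈ Y, G.Adj x y

/-- `B : Fin t → Set V` are the branch-sets of a `K_t`-minor in `G`:
pairwise disjoint nonempty sets, each inducing a connected subgraph,
and pairwise adjacent. -/
def IsKMinor {V : Type*} (G : SimpleGraph V) (t : ℕ) (B : Fin t → Set V) : Prop :=
  (∀ i, (B i).Nonempty) ∧
  (∀ i j, i ≠ j → Disjoint (B i) (B j)) ∧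
  (∀ i, (G.induce (B i)).Connected) ∧
  (∀ i j, i ≠ j → SetsAdjacent G (B i) (B j))

/-- A separation of `G`: `A ∪ B = V(G)`, both sides have a private vertex, and
no edge joins `A ∖ B` to `B ∖ A`. -/
def IsSeparation {V : Type*} (G : SimpleGraph V) (A B : Set V) : Prop :=
  A ∪ B = Set.univ ∧ (A \ B).Nonempty ∧ (B \ A).Nonempty ∧
  ∀ a ∈ A \ B, ∀ b ∈ B \ A, ¬ G.Adj a b


section Aux
set_option linter.unusedVariables false
set_option linter.unusedSectionVars false

section Toolkit
variable {V : Type*} {H : SimpleGraph V} {S T P K A B D : Set V} {a b c d u v x y z : V}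

def ReachIn (H : SimpleGraph V) (S : Set V) (a b : V) : Prop :=
  ∃ w : H.Walk a b, ∀ v ∈ w.support, v ∈ S

def ConnIn (H : SimpleGraph V) (S : Set V) : Prop := ∀ a ∈ S, ∀ b ∈ S, ReachIn H S a b

lemma reachIn_refl (ha : a ∈ S) : ReachIn H S a a := ⟨.nil, by simpa using ha⟩

lemma ReachIn.mem_left (h : ReachIn H S a b) : a ∈ S := by
  obtain ⟨w, hw⟩ := h; exact hw a w.start_mem_support

lemma ReachIn.mem_right (h : ReachIn H S a b) : b ∈ S := by
  obtain ⟨w, hw⟩ := h; exact hw b w.end_mem_support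

lemma ReachIn.symm (h : ReachIn H S a b) : ReachIn H S b a := by
  obtain ⟨w, hw⟩ := h
  exact ⟨w.reverse, by
    intro v hv
    rw [SimpleGraph.Walk.support_reverse] at hv
    exact hw v (List.mem_reverse.mp hv)⟩

lemma ReachIn.trans (h₁ : ReachIn H S a b) (h₂ : ReachIn H S b c) : ReachIn H S a c := by
  obtain ⟨w₁, hw₁⟩ := h₁; obtain ⟨w₂, hw₂⟩ := h₂
  refine ⟨w₁.append w₂, ?_⟩
  intro v hv
  rcases (SimpleGraph.Walk.mem_support_append_iff w₁ w₂).mp hv with h | h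
  exacts [hw₁ v h, hw₂ v h]

lemma reachIn_adj (hab : H.Adj a b) (ha : a ∈ S) (hb : b ∈ S) : ReachIn H S a b :=
  ⟨.cons hab .nil, by intro v hv; simp at hv; rcases hv with rfl | rfl <;> assumption⟩

lemma ReachIn.mono (hST : S ⊆ T) (h : ReachIn H S a b) : ReachIn H T a b := by
  obtain ⟨w, hw⟩ := h; exact ⟨w, fun v hv => hST (hw v hv)⟩

lemma walk_firstCross : ∀ {a : V} (w : H.Walk a b), (∀ v ∈ w.support, v ∈ S) → a ∉ P → b ∈ P →
    ∃ u v, H.Adj u v ∧ u ∈ S ∧ v ∈ S ∧ v ∈ P ∧ ReachIn H (S \ P) a u := by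
  intro a w
  induction w with
  | nil => intro _ ha hb; exact absurd hb ha
  | @cons a c b h p ih =>
    intro hsupp ha hb
    have haS : a ∈ S := hsupp a (by simp)
    have hcS : c ∈ S := hsupp c (by simp [SimpleGraph.Walk.support_cons])
    by_cases hc : c ∈ P
    · exact ⟨a, c, h, haS, hcS, hc, reachIn_refl ⟨haS, ha⟩⟩
    · obtain ⟨u', v', h1, h2, h3, h4, h5⟩ :=
        ih (fun v hv => hsupp v (by simp [SimpleGraph.Walk.support_cons]; right; exact hv)) hc hb
      exact ⟨u', v', h1, h2, h3, h4,
        (reachIn_adj (S := S \ P) h ⟨haS, ha⟩ ⟨hcS, hc⟩).trans h5⟩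

lemma ReachIn.firstCross (h : ReachIn H S a b) (ha : a ∉ P) (hb : b ∈ P) :
    ∃ u v, H.Adj u v ∧ u ∈ S ∧ v ∈ S ∧ v ∈ P ∧ ReachIn H (S \ P) a u := by
  obtain ⟨w, hw⟩ := h; exact walk_firstCross w hw ha hb

lemma walk_closure (hK : ∀ p ∈ K, ∀ q ∈ S, H.Adj p q → q ∈ K) :
    ∀ {a : V} (w : H.Walk a b), (∀ v ∈ w.support, v ∈ S) → a ∈ K → b ∈ K := by
  intro a w
  induction w with
  | nil => intro _ ha; exact ha
  | @cons a c b h p ih =>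
    intro hsupp ha
    have hcS : c ∈ S := hsupp c (by simp [SimpleGraph.Walk.support_cons])
    exact ih (fun v hv => hsupp v (by simp [SimpleGraph.Walk.support_cons]; right; exact hv))
      (hK a ha c hcS h)

lemma ReachIn.closure (hK : ∀ p ∈ K, ∀ q ∈ S, H.Adj p q → q ∈ K)
    (h : ReachIn H S a b) (ha : a ∈ K) : b ∈ K := by
  obtain ⟨w, hw⟩ := h; exact walk_closure hK w hw ha

lemma walk_supportReach : ∀ {a : V} (w : H.Walk a b), (∀ v ∈ w.support, v ∈ S) →
    ∀ v ∈ w.support, ReachIn H S a v := by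
  intro a w
  induction w with
  | nil =>
    intro hs v hv; simp at hv; subst hv; exact reachIn_refl (hs _ (by simp))
  | @cons a c b h p ih =>
    intro hsupp v hv
    have haS : a ∈ S := hsupp a (by simp)
    have hcS : c ∈ S := hsupp c (by simp [SimpleGraph.Walk.support_cons])
    rw [SimpleGraph.Walk.support_cons, List.mem_cons] at hv
    rcases hv with rfl | hv
    · exact reachIn_refl haS
    · exact (reachIn_adj h haS hcS).trans
        (ih (fun v hv => hsupp v (by simp [SimpleGraph.Walk.support_cons]; right; exact hv)) v hv)

lemma ReachIn.comp (h : ReachIn H S a b) : ReachIn H {v | ReachIn H S a v} a b := by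
  obtain ⟨w, hw⟩ := h
  exact ⟨w, fun v hv => walk_supportReach w hw v hv⟩

lemma reachIn_of_induceWalk : ∀ {a b : ↥S} (_ : (H.induce S).Walk a b), ReachIn H S (a : V) (b : V) := by
  intro a b w
  induction w with
  | nil => exact reachIn_refl (Subtype.mem _)
  | @cons a c b h p ih =>
    have h' : H.Adj (a : V) (c : V) := h
    exact (reachIn_adj h' a.2 c.2).trans ih

lemma induce_reachable_of_walk : ∀ {a : V} (w : H.Walk a b) (_ : ∀ v ∈ w.support, v ∈ S)
    (ha : a ∈ S) (hb : b ∈ S), (H.induce S).Reachable ⟨a, ha⟩ ⟨b, hb⟩ := by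
  intro a w
  induction w with
  | nil => intro _ ha hb; exact Reachable.refl _
  | @cons a c b h p ih =>
    intro hsupp ha hb
    have hcS : c ∈ S := hsupp c (by simp [SimpleGraph.Walk.support_cons])
    have h1 : (H.induce S).Adj ⟨a, ha⟩ ⟨c, hcS⟩ := h
    exact h1.reachable.trans
      (ih (fun v hv => hsupp v (by simp [SimpleGraph.Walk.support_cons]; right; exact hv)) hcS hb)

lemma connected_induce_iff' :
    (H.induce S).Connected ↔ S.Nonempty ∧ ConnIn H S := by
  constructor
  · intro h
    refine ⟨Set.nonempty_coe_sort.mp h.nonempty, ?_⟩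
    intro a ha b hb
    obtain ⟨w⟩ := h.preconnected ⟨a, ha⟩ ⟨b, hb⟩
    exact reachIn_of_induceWalk w
  · rintro ⟨⟨p, hp⟩, h⟩
    rw [connected_iff]
    refine ⟨?_, ⟨⟨p, hp⟩⟩⟩
    rintro ⟨a, ha⟩ ⟨b, hb⟩
    obtain ⟨w, hw⟩ := h a ha b hb
    exact induce_reachable_of_walk w hw ha hb

lemma connIn_of_hub (hz : z ∈ S) (h : ∀ w ∈ S, ReachIn H S w z) : ConnIn H S :=
  fun a ha b hb => (h a ha).trans (h b hb).symm

lemma connIn_union_singleton (hC : ConnIn H D) (hd : d ∈ D) (hadj : H.Adj z d) :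
    ConnIn H (D ∪ {z}) := by
  refine connIn_of_hub (z := z) (by simp) ?_
  intro w hw
  rcases hw with hw | hw
  · exact ((hC w hw d hd).mono Set.subset_union_left).trans
      (reachIn_adj hadj.symm (by left; exact hd) (by simp))
  · simp at hw; subst hw; exact reachIn_refl (by simp)

end Toolkit
section Core
variable {V : Type*} [Fintype V] {H : SimpleGraph V} {S P K A B D : Set V} {a b c s u w x y z : V}

/-- From a failure of connectivity of `B \ {u}`, extract a "piece": a component
of `B \ {u}` not containing `y`. -/
lemma piece_exists (hBconn : ConnIn H B) (hyB : y ∈ B) (huB : u ∈ B) (huy : u ≠ y)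
    (hnc : ¬ ConnIn H (B \ {u})) :
    ∃ K : Set V, K.Nonempty ∧ K ⊆ B \ {u} ∧ y ∉ K ∧
      (∀ p ∈ K, ∀ q ∈ B \ {u}, H.Adj p q → q ∈ K) ∧ ConnIn H K := by
  have hyB' : y ∈ B \ {u} := ⟨hyB, fun h => huy (by simpa using h.symm)⟩
  have ht : ∃ t ∈ B \ {u}, ¬ ReachIn H (B \ {u}) y t := by
    by_contra hall
    push_neg at hall
    refine hnc ?_
    intro p hp q hq
    exact (hall p hp).symm.trans (hall q hq)
  obtain ⟨t, htB, hty⟩ := ht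
  refine ⟨{v | ReachIn H (B \ {u}) t v}, ⟨t, reachIn_refl htB⟩, ?_, ?_, ?_, ?_⟩
  · intro v hv; exact ReachIn.mem_right hv
  · intro hyK; exact hty (ReachIn.symm hyK)
  · intro p hp q hq hadj; exact hp.trans (reachIn_adj hadj (ReachIn.mem_right hp) hq)
  · intro p hp q hq
    exact (ReachIn.comp hp).symm.trans (ReachIn.comp hq)

/-- piece is disjoint from things reachable from y -/
lemma piece_not_reach (hycl : y ∉ K) (hcl : ∀ p ∈ K, ∀ q ∈ S, H.Adj p q → q ∈ K)
    (hv : v ∈ K) (h : ReachIn H S y v) : False :=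
  hycl (h.symm.closure hcl hv)

/-- The key claim: in a good pair `(A,B)` there is a vertex `v ≠ y` of `B`,
adjacent to `A`, whose removal keeps `B` connected. -/
lemma claimK {x y : V} {D A B : Set V}
    (h2 : ∀ v a b : V, a ≠ v → b ≠ v → ReachIn H ({v}ᶜ : Set V) a b)
    (hclosedD : ∀ u ∈ D, ∀ v, H.Adj u v → v ∈ D ∨ v = x ∨ v = y)
    (hxy : x ≠ y) (hxD : x ∉ D) (hyD : y ∉ D)
    (hU : A ∪ B = D ∪ {x, y}) (hdisj : Disjoint A B)
    (hAconn : ConnIn H A) (hBconn : ConnIn H B) (hxA : x ∈ A) (hyB : y ∈ B)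
    (hb₁ : ∃ b ∈ B, b ≠ y) :
    ∃ v ∈ B, v ≠ y ∧ (∃ a ∈ A, H.Adj v a) ∧ ConnIn H (B \ {v}) := by
  by_contra hK
  push_neg at hK
  have hxB : x ∉ B := fun h => (Set.disjoint_left.mp hdisj hxA) h
  have hyA : y ∉ A := fun h => (Set.disjoint_left.mp hdisj h) hyB
  have hBsub : ∀ b ∈ B, b ≠ y → b ∈ D := by
    intro b hb hby
    have : b ∈ D ∪ {x, y} := hU ▸ (Set.mem_union_right _ hb)
    rcases this with h | h
    · exact h
    · rcases h with h | h
      · exact absurd (h ▸ hb) hxB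
      · exact absurd h hby
  have hDAB : ∀ v ∈ D, v ∈ A ∨ v ∈ B := by
    intro v hv
    have : v ∈ A ∪ B := hU ▸ Set.mem_union_left _ hv
    exact this
  -- find a vertex of B \ {y} adjacent to A
  have hadjA : ∀ b ∈ B, b ≠ y → ∃ u ∈ B, u ≠ y ∧ ∃ a ∈ A, H.Adj u a := by
    intro b hb hby
    have hre : ReachIn H ({y}ᶜ : Set V) b x := h2 y b x hby hxy
    obtain ⟨u, v, hadj, huS, hvS, hvP, hres⟩ := hre.firstCross (P := Bᶜ)
        (by simpa using hb) (by simpa using hxB)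
    have huB : u ∈ B := by
      have := hres.mem_right; simp at this; exact this.2
    have huy : u ≠ y := by
      have := hres.mem_right; simp at this
      intro h; exact (h ▸ this.1) rfl
    have hvy : v ≠ y := by simpa using hvS
    have hvB : v ∉ B := by simpa using hvP
    have huD : u ∈ D := hBsub u huB huy
    have hvA : v ∈ A := by
      rcases hclosedD u huD v hadj with h | h | h
      · rcases hDAB v h with h' | h'
        · exact h'
        · exact absurd h' hvB
      · exact h ▸ hxA
      · exact absurd h hvy
    exact ⟨u, huB, huy, v, hvA, hadj⟩
  -- Ω : pieces
  have hPieceOf : ∀ u ∈ B, u ≠ y → (∃ a ∈ A, H.Adj u a) →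
      ∃ K : Set V, K.Nonempty ∧ K ⊆ B \ {u} ∧ y ∉ K ∧
        (∀ p ∈ K, ∀ q ∈ B \ {u}, H.Adj p q → q ∈ K) ∧ ConnIn H K := by
    intro u hu huy hadj
    exact piece_exists hBconn hyB hu huy (hK u hu huy hadj)
  set Ω : Set ℕ := {n | ∃ w K, (w ∈ B ∧ w ≠ y ∧ K ⊆ B \ {w} ∧ K.Nonempty ∧ y ∉ K ∧
      (∀ p ∈ K, ∀ q ∈ B \ {w}, H.Adj p q → q ∈ K) ∧ ConnIn H K) ∧ K.ncard = n} with hΩ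
  have hΩne : Ω.Nonempty := by
    obtain ⟨b, hb, hby⟩ := hb₁
    obtain ⟨u, hu, huy, hua⟩ := hadjA b hb hby
    obtain ⟨K, hK1, hK2, hK3, hK4, hK5⟩ := hPieceOf u hu huy hua
    exact ⟨K.ncard, u, K, ⟨hu, huy, hK2, hK1, hK3, hK4, hK5⟩, rfl⟩
  obtain ⟨w, K, ⟨hwB, hwy, hKsub, hKne, hyK, hKcl, hKconn⟩, hKcard⟩ :=
    Nat.sInf_mem hΩne
  -- step 1 : K has a vertex adjacent to A
  have hKD : ∀ k ∈ K, k ∈ D := by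
    intro k hk
    exact hBsub k (hKsub hk).1 (fun h => hyK (h ▸ hk))
  have step1 : ∃ u ∈ K, ∃ a ∈ A, H.Adj u a := by
    by_contra hno
    push_neg at hno
    obtain ⟨k, hk⟩ := hKne
    have hkw : k ≠ w := (hKsub hk).2
    have hxw : x ≠ w := fun h => (Set.disjoint_left.mp hdisj hxA) (h ▸ hwB)
    have hre : ReachIn H ({w}ᶜ : Set V) k x := h2 w k x hkw hxw
    have hxK : x ∉ K := fun h => hxB (hKsub h).1
    obtain ⟨u, v, hadj, huS, hvS, hvP, hres⟩ := hre.firstCross (P := Kᶜ)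
        (by simpa using hk) (by simpa using hxK)
    have huK : u ∈ K := by
      have := hres.mem_right; simp at this; exact this.2
    have hvK : v ∉ K := by simpa using hvP
    have hvw : v ≠ w := by simpa using hvS
    have huD : u ∈ D := hKD u huK
    rcases hclosedD u huD v hadj with h | h | h
    · rcases hDAB v h with h' | h'
      · exact hno u huK v h' hadj
      · exact hvK (hKcl u huK v ⟨h', hvw⟩ hadj)
    · exact hno u huK x (h ▸ hxA) (h ▸ hadj)
    · refine hvK (hKcl u huK v ⟨h ▸ hyB, h ▸ (Ne.symm hwy)⟩ hadj)
  obtain ⟨u, huK, hu_adjA⟩ := step1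
  have huB : u ∈ B := (hKsub huK).1
  have huy : u ≠ y := fun h => hyK (h ▸ huK)
  have huw : u ≠ w := (hKsub huK).2
  obtain ⟨K'', hK''ne, hK''sub, hyK'', hK''cl, hK''conn⟩ := hPieceOf u huB huy hu_adjA
  -- (a) : ReachIn H (B \ {u}) y w
  have hyw : ReachIn H (B \ {u}) y w := by
    have hre : ReachIn H B y w := hBconn y hyB w hwB
    obtain ⟨p, q, hadj, hpS, hqS, hqP, hres⟩ := hre.firstCross (P := {w})
        (by simpa using (Ne.symm hwy)) rfl
    have hq : q = w := hqP
    rw [hq] at hadj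
    have hres' : ReachIn H (B \ {w}) y p := by
      refine hres.mono ?_; intro r hr; exact ⟨hr.1, by simpa using hr.2⟩
    have hcomp := hres'.comp
    have hsub2 : {v | ReachIn H (B \ {w}) y v} ⊆ B \ {u} := by
      intro r hr
      have hrB : r ∈ B \ {w} := ReachIn.mem_right hr
      refine ⟨hrB.1, ?_⟩
      intro h
      exact piece_not_reach hyK hKcl (h ▸ huK) hr
    have h1 : ReachIn H (B \ {u}) y p := hcomp.mono hsub2
    exact h1.trans (reachIn_adj hadj h1.mem_right ⟨hwB, by simpa using (Ne.symm huw)⟩)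
  have hwK'' : w ∉ K'' := fun h => piece_not_reach hyK'' hK''cl h hyw
  -- (c) : u adjacent to K''
  obtain ⟨t'', ht''⟩ := hK''ne
  have hstep_c : ∃ p ∈ K'', H.Adj p u := by
    have hre : ReachIn H B t'' y := hBconn t'' (hK''sub ht'').1 y hyB
    obtain ⟨p, q, hadj, hpS, hqS, hqP, hres⟩ := hre.firstCross (P := K''ᶜ)
        (by simpa using ht'') (by simpa using hyK'')
    have hpK : p ∈ K'' := by
      have := hres.mem_right; simp at this; exact this.2
    have hqK : q ∉ K'' := hqP
    have hqu : q = u := by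
      by_contra hqu
      exact hqK (hK''cl p hpK q ((Set.mem_diff _).mpr ⟨hqS, by simpa using hqu⟩) hadj)
    exact ⟨p, hpK, hqu ▸ hadj⟩
  obtain ⟨p, hpK'', hpu⟩ := hstep_c
  -- (d) : K'' ⊆ K
  have hK''K : K'' ⊆ K := by
    intro k hk
    have hK''Bw : K'' ⊆ B \ {w} := by
      intro r hr
      exact ⟨(hK''sub hr).1, fun h => hwK'' ((by simpa using h : r = w) ▸ hr)⟩
    have h1 : ReachIn H (B \ {w}) u k := by
      refine (reachIn_adj (S := B \ {w}) hpu.symm ((Set.mem_diff _).mpr ⟨huB, by simpa using huw⟩) (hK''Bw hpK'')).trans ?_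
      exact (hK''conn p hpK'' k hk).mono hK''Bw
    exact h1.closure hKcl huK
  have huK'' : u ∉ K'' := fun h => ((hK''sub h).2 : u ≠ u) rfl
  have hlt : K''.ncard < K.ncard :=
    Set.ncard_lt_ncard ⟨hK''K, fun h => huK'' (h huK)⟩ (Set.toFinite K)
  have hmem : K''.ncard ∈ Ω :=
    ⟨u, K'', ⟨huB, huy, hK''sub, ⟨t'', ht''⟩, hyK'', hK''cl, hK''conn⟩, rfl⟩
  have := Nat.sInf_le hmem
  omega

end Core
section LemM
variable {V : Type*} [Fintype V] {H : SimpleGraph V}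

/-- The main splitting lemma: a component-with-attachments `D ∪ {x,y}` can be
partitioned into two connected sets separating `c` from `s` and `x` from `y`. -/
lemma lemM {x y c s : V} {D : Set V}
    (h2 : ∀ v a b : V, a ≠ v → b ≠ v → ReachIn H ({v}ᶜ : Set V) a b)
    (hxy : x ≠ y) (hxD : x ∉ D) (hyD : y ∉ D)
    (hDconn : ConnIn H D)
    (hclosedD : ∀ u ∈ D, ∀ v, H.Adj u v → v ∈ D ∨ v = x ∨ v = y)
    (hyadj : ∃ d ∈ D, H.Adj y d)
    (hc : c ∈ D) (hs : s ∈ D) (hcs : c ≠ s) :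
    ∃ A B : Set V, A ∪ B = D ∪ {x, y} ∧ Disjoint A B ∧
      ConnIn H A ∧ ConnIn H B ∧
      c ∈ A ∧ s ∈ B ∧ ((x ∈ A ∧ y ∈ B) ∨ (y ∈ A ∧ x ∈ B)) := by
  by_contra hno
  push_neg at hno
  -- from any good pair, c and s are on the same side
  have hsame : ∀ A B : Set V, A ∪ B = D ∪ {x, y} → Disjoint A B →
      ConnIn H A → ConnIn H B → x ∈ A → y ∈ B →
      (c ∈ A ∧ s ∈ A) ∨ (c ∈ B ∧ s ∈ B) := by
    intro A B hU hd hA hB hxA hyB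
    have hcAB : c ∈ A ∪ B := hU ▸ Set.mem_union_left _ hc
    have hsAB : s ∈ A ∪ B := hU ▸ Set.mem_union_left _ hs
    rcases hcAB with hcA | hcB
    · rcases hsAB with hsA | hsB
      · exact Or.inl ⟨hcA, hsA⟩
      · exact absurd hyB ((hno A B hU hd hA hB hcA hsB).1 hxA)
    · rcases hsAB with hsA | hsB
      · -- swapped pair
        exact absurd hxA
          ((hno B A (by rw [Set.union_comm]; exact hU) hd.symm hB hA hcB hsA).2 hyB)
      · exact Or.inr ⟨hcB, hsB⟩
  set T : Set ℕ := {n | ∃ A B : Set V, (A ∪ B = D ∪ {x, y} ∧ Disjoint A B ∧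
      ConnIn H A ∧ ConnIn H B ∧ x ∈ A ∧ y ∈ B ∧ c ∈ B ∧ s ∈ B) ∧ B.ncard = n} with hT
  have hTne : T.Nonempty := by
    obtain ⟨d, hd, hyd⟩ := hyadj
    refine ⟨(D ∪ {y}).ncard, {x}, D ∪ {y}, ⟨?_, ?_, ?_, ?_, rfl, ?_, ?_, ?_⟩, rfl⟩
    · ext v; simp [Set.mem_union, Set.mem_insert_iff]; tauto
    · rw [Set.disjoint_left]
      rintro v rfl
      intro h
      rcases h with h | h
      · exact hxD h
      · exact hxy (by simpa using h)
    · intro a ha b hb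
      simp at ha hb; subst ha; subst hb; exact reachIn_refl rfl
    · exact connIn_union_singleton hDconn hd hyd
    · simp
    · exact Or.inl hc
    · exact Or.inl hs
  obtain ⟨A, B, ⟨hU, hdisj, hAconn, hBconn, hxA, hyB, hcB, hsB⟩, hBcard⟩ :=
    Nat.sInf_mem hTne
  have hcy : c ≠ y := fun h => hyD (h ▸ hc)
  obtain ⟨v, hvB, hvy, hvadj, hvconn⟩ :=
    claimK h2 hclosedD hxy hxD hyD hU hdisj hAconn hBconn hxA hyB ⟨c, hcB, hcy⟩
  obtain ⟨a, haA, hva⟩ := hvadj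
  -- new pair
  have hU' : (A ∪ {v}) ∪ (B \ {v}) = D ∪ {x, y} := by
    rw [← hU]; ext r
    simp only [Set.mem_union, Set.mem_diff, Set.mem_singleton_iff]
    constructor
    · rintro ((h | h) | ⟨h, _⟩)
      · exact Or.inl h
      · exact Or.inr (h ▸ hvB)
      · exact Or.inr h
    · rintro (h | h)
      · exact Or.inl (Or.inl h)
      · by_cases hrv : r = v
        · exact Or.inl (Or.inr hrv)
        · exact Or.inr ⟨h, hrv⟩
  have hdisj' : Disjoint (A ∪ {v}) (B \ {v}) := by
    rw [Set.disjoint_left]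
    rintro r (hr | hr) hr'
    · exact Set.disjoint_left.mp hdisj hr hr'.1
    · exact hr'.2 (by simpa using hr)
  have hAconn' : ConnIn H (A ∪ {v}) := connIn_union_singleton hAconn haA hva
  have hyBv : y ∈ B \ {v} := ⟨hyB, by simpa using Ne.symm hvy⟩
  rcases hsame (A ∪ {v}) (B \ {v}) hU' hdisj' hAconn' hvconn
      (Or.inl hxA) hyBv with ⟨h1, h2'⟩ | ⟨h1, h2'⟩
  · -- both c, s moved to A∪{v} : impossible since only v moved
    have hc' : c = v := by
      rcases h1 with h | h
      · exact absurd h (fun hcA => Set.disjoint_left.mp hdisj hcA hcB)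
      · simpa using h
    have hs' : s = v := by
      rcases h2' with h | h
      · exact absurd h (fun hsA => Set.disjoint_left.mp hdisj hsA hsB)
      · simpa using h
    exact hcs (hc'.trans hs'.symm)
  · -- smaller pair in T
    have hmem : (B \ {v}).ncard ∈ T :=
      ⟨A ∪ {v}, B \ {v}, ⟨hU', hdisj', hAconn', hvconn, Or.inl hxA, hyBv, h1, h2'⟩, rfl⟩
    have hlt : (B \ {v}).ncard < B.ncard :=
      Set.ncard_diff_singleton_lt_of_mem hvB (Set.toFinite B)
    have := Nat.sInf_le hmem
    omega

end LemM
section Split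
variable {V : Type*} {H : SimpleGraph V}

lemma splitComp {c s z : V} {D A B : Set V}
    (hAconn : ConnIn H A) (hDconn : ConnIn H D)
    (hcA : c ∈ A) (hcD : c ∈ D) (hsB : s ∈ B) (hsD : s ∈ D)
    (hzA : z ∈ A) (hzD : z ∉ D)
    (hdisj : Disjoint A B) (hDAB : D ⊆ A ∪ B) :
    ∃ A₀ : Set V, c ∈ A₀ ∧ A₀ ⊆ A ∧ z ∈ A \ A₀ ∧ ConnIn H A₀ ∧
      (∃ p ∈ A₀, H.Adj p z) ∧ (∃ p ∈ A₀, ∃ q ∈ B, H.Adj p q) ∧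
      (∀ w ∈ A \ A₀, ReachIn H (A \ A₀) w z) := by
  classical
  set A₀ : Set V := {v | ReachIn H (A \ {z}) c v} with hA₀
  have hcz : c ≠ z := fun h => hzD (h ▸ hcD)
  have hcAz : c ∈ A \ {z} := ⟨hcA, by simpa using hcz⟩
  have hcA₀ : c ∈ A₀ := reachIn_refl hcAz
  have hA₀sub : A₀ ⊆ A \ {z} := fun v hv => ReachIn.mem_right hv
  have hzA₀ : z ∉ A₀ := fun h => (hA₀sub h).2 rfl
  have hclA₀ : ∀ p ∈ A₀, ∀ q ∈ A \ {z}, H.Adj p q → q ∈ A₀ := by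
    intro p hp q hq hadj
    exact ReachIn.trans hp (reachIn_adj hadj (hA₀sub hp) hq)
  have hA₀conn : ConnIn H A₀ := by
    intro p hp q hq
    exact (ReachIn.comp hp).symm.trans (ReachIn.comp hq)
  have hzAA₀ : z ∈ A \ A₀ := ⟨hzA, hzA₀⟩
  -- edge from A₀ to z
  have hedgez : ∃ p ∈ A₀, H.Adj p z := by
    obtain ⟨u, v, hadj, huS, hvS, hvP, hres⟩ := (hAconn c hcA z hzA).firstCross
      (P := A₀ᶜ) (by simpa using hcA₀) (by simpa using hzA₀)
    have huA₀ : u ∈ A₀ := by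
      have := hres.mem_right; simp at this; exact this.2
    have hvz : v = z := by
      by_contra hvz
      exact (by simpa using hvP : v ∉ A₀) (hclA₀ u huA₀ v ⟨hvS, by simpa using hvz⟩ hadj)
    exact ⟨u, huA₀, hvz ▸ hadj⟩
  -- edge from A₀ to B
  have hedgeB : ∃ p ∈ A₀, ∃ q ∈ B, H.Adj p q := by
    have hsA₀ : s ∉ A₀ := fun h => Set.disjoint_left.mp hdisj (hA₀sub h).1 hsB
    obtain ⟨u, v, hadj, huS, hvS, hvP, hres⟩ := (hDconn c hcD s hsD).firstCross
      (P := A₀ᶜ) (by simpa using hcA₀) (by simpa using hsA₀)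
    have huA₀ : u ∈ A₀ := by
      have := hres.mem_right; simp at this; exact this.2
    have hvA₀ : v ∉ A₀ := by simpa using hvP
    rcases hDAB hvS with hvA | hvB
    · exfalso
      have hvz : v ≠ z := fun h => hzD (h ▸ hvS)
      exact hvA₀ (hclA₀ u huA₀ v ⟨hvA, by simpa using hvz⟩ hadj)
    · exact ⟨u, huA₀, v, hvB, hadj⟩
  refine ⟨A₀, hcA₀, fun v hv => (hA₀sub hv).1, hzAA₀, hA₀conn, hedgez, hedgeB, ?_⟩
  intro w hw
  by_cases hwz : w = z
  · subst hwz; exact reachIn_refl hzAA₀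
  · have hwAz : w ∈ A \ {z} := ⟨hw.1, by simpa using hwz⟩
    set Kw : Set V := {v | ReachIn H (A \ {z}) w v} with hKw
    have hwKw : w ∈ Kw := reachIn_refl hwAz
    have hKwA₀ : ∀ v ∈ Kw, v ∉ A₀ := by
      intro v hv hvA₀
      exact hw.2 (ReachIn.trans hvA₀ (ReachIn.symm hv))
    have hclKw : ∀ p ∈ Kw, ∀ q ∈ A \ {z}, H.Adj p q → q ∈ Kw := by
      intro p hp q hq hadj
      exact ReachIn.trans hp (reachIn_adj hadj (ReachIn.mem_right hp) hq)
    have hzKw : z ∉ Kw := fun h => (ReachIn.mem_right h).2 rfl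
    obtain ⟨u, v, hadj, huS, hvS, hvP, hres⟩ := (hAconn w hw.1 z hzA).firstCross
      (P := Kwᶜ) (by simpa using hwKw) (by simpa using hzKw)
    have huKw : u ∈ Kw := by
      have := hres.mem_right; simp at this; exact this.2
    have hvz : v = z := by
      by_contra hvz
      exact (by simpa using hvP : v ∉ Kw) (hclKw u huKw v ⟨hvS, by simpa using hvz⟩ hadj)
    have hsubKw : A \ Kwᶜ ⊆ A \ A₀ := by
      intro r hr
      have hrKw : r ∈ Kw := by simpa using hr.2
      exact ⟨hr.1, hKwA₀ r hrKw⟩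
    have h1 : ReachIn H (A \ A₀) w u := hres.mono hsubKw
    exact h1.trans (reachIn_adj (hvz ▸ hadj) h1.mem_right hzAA₀)

end Split

end Aux

/-- If `H` is 2-connected, `c₁, c₂, c₃` are distinct, `s₄ ∉ {c₁,c₂,c₃}`, and
`H − {x,y}` has exactly three components `C₁, C₂, C₃` with `cᵢ ∈ Cᵢ`, then there
are disjoint connected branch-sets `B₁, B₂, B₃, B₄` with `cᵢ ∈ Bᵢ`, `s₄ ∈ B₄`,
pairwise adjacent except possibly the pair `B₂, B₃`. -/
theorem stmt13 {V : Type*} [Fintype V] (H : SimpleGraph V)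
    (hcard : 2 < Fintype.card V)
    (h2conn : ∀ s : Set V, s.ncard < 2 → (H.induce (sᶜ : Set V)).Connected)
    (c₁ c₂ c₃ s₄ x y : V)
    (hc12 : c₁ ≠ c₂) (hc13 : c₁ ≠ c₃) (hc23 : c₂ ≠ c₃)
    (hs₄ : s₄ ∉ ({c₁, c₂, c₃} : Set V)) (hxy : x ≠ y)
    (C₁ C₂ C₃ : Set V)
    (hcover : C₁ ∪ C₂ ∪ C₃ = (({x, y} : Set V)ᶜ : Set V))
    (hd12 : Disjoint C₁ C₂) (hd13 : Disjoint C₁ C₃) (hd23 : Disjoint C₂ C₃)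
    (hconn₁ : (H.induce C₁).Connected) (hconn₂ : (H.induce C₂).Connected)
    (hconn₃ : (H.induce C₃).Connected)
    (hne12 : ∀ u ∈ C₁, ∀ v ∈ C₂, ¬ H.Adj u v)
    (hne13 : ∀ u ∈ C₁, ∀ v ∈ C₃, ¬ H.Adj u v)
    (hne23 : ∀ u ∈ C₂, ∀ v ∈ C₃, ¬ H.Adj u v)
    (hc₁ : c₁ ∈ C₁) (hc₂ : c₂ ∈ C₂) (hc₃ : c₃ ∈ C₃) :
    ∃ B₁ B₂ B₃ B₄ : Set V,
      c₁ ∈ B₁ ∧ c₂ ∈ B₂ ∧ c₃ ∈ B₃ ∧ s₄ ∈ B₄ ∧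
      Disjoint B₁ B₂ ∧ Disjoint B₁ B₃ ∧ Disjoint B₁ B₄ ∧
      Disjoint B₂ B₃ ∧ Disjoint B₂ B₄ ∧ Disjoint B₃ B₄ ∧
      (H.induce B₁).Connected ∧ (H.induce B₂).Connected ∧
      (H.induce B₃).Connected ∧ (H.induce B₄).Connected ∧
      SetsAdjacent H B₁ B₂ ∧ SetsAdjacent H B₁ B₃ ∧ SetsAdjacent H B₁ B₄ ∧
      SetsAdjacent H B₂ B₄ ∧ SetsAdjacent H B₃ B₄ := by
  classical
  have hR₁ : ConnIn H C₁ := (connected_induce_iff'.mp hconn₁).2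
  have hR₂ : ConnIn H C₂ := (connected_induce_iff'.mp hconn₂).2
  have hR₃ : ConnIn H C₃ := (connected_induce_iff'.mp hconn₃).2
  have h2 : ∀ v a b : V, a ≠ v → b ≠ v → ReachIn H ({v}ᶜ : Set V) a b := by
    intro v a b hav hbv
    have h := h2conn {v} (by simp)
    exact (connected_induce_iff'.mp h).2 a (by simpa using hav) b (by simpa using hbv)
  have hnotxy : ∀ {v : V}, v ∈ C₁ ∪ C₂ ∪ C₃ → v ≠ x ∧ v ≠ y := by
    intro v hv
    rw [hcover] at hv
    simpa using hv
  have hxC₁ : x ∉ C₁ := fun h => (hnotxy (Or.inl (Or.inl h))).1 rfl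
  have hxC₂ : x ∉ C₂ := fun h => (hnotxy (Or.inl (Or.inr h))).1 rfl
  have hxC₃ : x ∉ C₃ := fun h => (hnotxy (Or.inr h)).1 rfl
  have hyC₁ : y ∉ C₁ := fun h => (hnotxy (Or.inl (Or.inl h))).2 rfl
  have hyC₂ : y ∉ C₂ := fun h => (hnotxy (Or.inl (Or.inr h))).2 rfl
  have hyC₃ : y ∉ C₃ := fun h => (hnotxy (Or.inr h)).2 rfl
  have hmemU : ∀ {v : V}, v ≠ x → v ≠ y → v ∈ C₁ ∪ C₂ ∪ C₃ := by
    intro v h1 h2'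
    rw [hcover]; simp [h1, h2']
  have hclo₁ : ∀ u ∈ C₁, ∀ v, H.Adj u v → v ∈ C₁ ∨ v = x ∨ v = y := by
    intro u hu v hadj
    by_cases hvx : v = x
    · exact Or.inr (Or.inl hvx)
    by_cases hvy : v = y
    · exact Or.inr (Or.inr hvy)
    rcases hmemU hvx hvy with (h | h) | h
    · exact Or.inl h
    · exact absurd hadj (hne12 u hu v h)
    · exact absurd hadj (hne13 u hu v h)
  have hclo₂ : ∀ u ∈ C₂, ∀ v, H.Adj u v → v ∈ C₂ ∨ v = x ∨ v = y := by
    intro u hu v hadj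
    by_cases hvx : v = x
    · exact Or.inr (Or.inl hvx)
    by_cases hvy : v = y
    · exact Or.inr (Or.inr hvy)
    rcases hmemU hvx hvy with (h | h) | h
    · exact absurd hadj.symm (hne12 v h u hu)
    · exact Or.inl h
    · exact absurd hadj (hne23 u hu v h)
  have hclo₃ : ∀ u ∈ C₃, ∀ v, H.Adj u v → v ∈ C₃ ∨ v = x ∨ v = y := by
    intro u hu v hadj
    by_cases hvx : v = x
    · exact Or.inr (Or.inl hvx)
    by_cases hvy : v = y
    · exact Or.inr (Or.inr hvy)
    rcases hmemU hvx hvy with (h | h) | h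
    · exact absurd hadj.symm (hne13 v h u hu)
    · exact absurd hadj.symm (hne23 v h u hu)
    · exact Or.inl h
  -- neighbour extraction
  have hnb : ∀ (C : Set V) (cc b : V), cc ∈ C → b ∉ C →
      (∀ u ∈ C, ∀ v, H.Adj u v → v ∈ C ∨ v = x ∨ v = y) →
      ∀ z z' : V, ((z = x ∧ z' = y) ∨ (z = y ∧ z' = x)) → cc ≠ z' → b ≠ z' →
      ∃ d ∈ C, H.Adj z d := by
    intro C cc b hcc hb hclo z z' hzz' hccz' hbz'
    obtain ⟨u, v, hadj, huS, hvS, hvP, hres⟩ := (h2 z' cc b hccz' hbz').firstCross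
      (P := Cᶜ) (by simpa using hcc) (by simpa using hb)
    have huC : u ∈ C := by
      have := hres.mem_right; simp at this; exact this.2
    have hvC : v ∉ C := by simpa using hvP
    have hvz' : v ≠ z' := by simpa using hvS
    rcases hclo u huC v hadj with h | h | h
    · exact absurd h hvC
    · rcases hzz' with ⟨rfl, rfl⟩ | ⟨rfl, rfl⟩
      · exact ⟨u, huC, (h ▸ hadj).symm⟩
      · exact absurd h hvz'
    · rcases hzz' with ⟨rfl, rfl⟩ | ⟨rfl, rfl⟩
      · exact absurd h hvz'
      · exact ⟨u, huC, (h ▸ hadj).symm⟩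
  have hc₂C₁ : c₂ ∉ C₁ := fun h => Set.disjoint_left.mp hd12 h hc₂
  have hc₁C₂ : c₁ ∉ C₂ := fun h => Set.disjoint_left.mp hd12 hc₁ h
  have hc₁C₃ : c₁ ∉ C₃ := fun h => Set.disjoint_left.mp hd13 hc₁ h
  have hc₁x : c₁ ≠ x := fun h => hxC₁ (h ▸ hc₁)
  have hc₁y : c₁ ≠ y := fun h => hyC₁ (h ▸ hc₁)
  have hc₂x : c₂ ≠ x := fun h => hxC₂ (h ▸ hc₂)
  have hc₂y : c₂ ≠ y := fun h => hyC₂ (h ▸ hc₂)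
  have hc₃x : c₃ ≠ x := fun h => hxC₃ (h ▸ hc₃)
  have hc₃y : c₃ ≠ y := fun h => hyC₃ (h ▸ hc₃)
  have hxN₁ : ∃ d ∈ C₁, H.Adj x d :=
    hnb C₁ c₁ c₂ hc₁ hc₂C₁ hclo₁ x y (Or.inl ⟨rfl, rfl⟩) hc₁y hc₂y
  have hyN₁ : ∃ d ∈ C₁, H.Adj y d :=
    hnb C₁ c₁ c₂ hc₁ hc₂C₁ hclo₁ y x (Or.inr ⟨rfl, rfl⟩) hc₁x hc₂x
  have hxN₂ : ∃ d ∈ C₂, H.Adj x d :=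
    hnb C₂ c₂ c₁ hc₂ hc₁C₂ hclo₂ x y (Or.inl ⟨rfl, rfl⟩) hc₂y hc₁y
  have hyN₂ : ∃ d ∈ C₂, H.Adj y d :=
    hnb C₂ c₂ c₁ hc₂ hc₁C₂ hclo₂ y x (Or.inr ⟨rfl, rfl⟩) hc₂x hc₁x
  have hxN₃ : ∃ d ∈ C₃, H.Adj x d :=
    hnb C₃ c₃ c₁ hc₃ hc₁C₃ hclo₃ x y (Or.inl ⟨rfl, rfl⟩) hc₃y hc₁y
  have hyN₃ : ∃ d ∈ C₃, H.Adj y d :=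
    hnb C₃ c₃ c₁ hc₃ hc₁C₃ hclo₃ y x (Or.inr ⟨rfl, rfl⟩) hc₃x hc₁x
  -- helper to package connectivity
  have pack : ∀ (S : Set V) (v : V), v ∈ S → ConnIn H S → (H.induce S).Connected :=
    fun S v hv hS => connected_induce_iff'.mpr ⟨⟨v, hv⟩, hS⟩
  by_cases hsx : s₄ = x
  · -- B₁ = C₁ ∪ {y}, B₄ = {x}
    subst hsx
    obtain ⟨d₁, hd₁, hyd₁⟩ := hyN₁
    obtain ⟨e₂, he₂, hye₂⟩ := hyN₂
    obtain ⟨e₃, he₃, hye₃⟩ := hyN₃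
    obtain ⟨f₁, hf₁, hxf₁⟩ := hxN₁
    obtain ⟨f₂, hf₂, hxf₂⟩ := hxN₂
    obtain ⟨f₃, hf₃, hxf₃⟩ := hxN₃
    refine ⟨C₁ ∪ {y}, C₂, C₃, {s₄}, Or.inl hc₁, hc₂, hc₃, rfl, ?_, ?_, ?_, hd23, ?_, ?_,
      pack _ c₁ (Or.inl hc₁) (connIn_union_singleton hR₁ hd₁ hyd₁),
      pack _ c₂ hc₂ hR₂, pack _ c₃ hc₃ hR₃,
      pack _ s₄ rfl (fun a ha b hb => by
        simp at ha hb; subst ha; subst hb; exact reachIn_refl rfl), ?_, ?_, ?_, ?_, ?_⟩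
    · rw [Set.disjoint_left]; rintro v (hv | hv) hv₂
      · exact Set.disjoint_left.mp hd12 hv hv₂
      · simp at hv; subst hv; exact hyC₂ hv₂
    · rw [Set.disjoint_left]; rintro v (hv | hv) hv₃
      · exact Set.disjoint_left.mp hd13 hv hv₃
      · simp at hv; subst hv; exact hyC₃ hv₃
    · rw [Set.disjoint_left]; rintro v (hv | hv) hv₄
      · simp at hv₄; subst hv₄; exact hxC₁ hv
      · simp at hv hv₄; subst hv hv₄; exact hxy rfl
    · rw [Set.disjoint_left]; rintro v hv hv₄
      simp at hv₄; subst hv₄; exact hxC₂ hv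
    · rw [Set.disjoint_left]; rintro v hv hv₄
      simp at hv₄; subst hv₄; exact hxC₃ hv
    · exact ⟨y, Or.inr rfl, e₂, he₂, hye₂⟩
    · exact ⟨y, Or.inr rfl, e₃, he₃, hye₃⟩
    · exact ⟨f₁, Or.inl hf₁, s₄, rfl, hxf₁.symm⟩
    · exact ⟨f₂, hf₂, s₄, rfl, hxf₂.symm⟩
    · exact ⟨f₃, hf₃, s₄, rfl, hxf₃.symm⟩
  by_cases hsy : s₄ = y
  · subst hsy
    obtain ⟨d₁, hd₁, hxd₁⟩ := hxN₁
    obtain ⟨e₂, he₂, hxe₂⟩ := hxN₂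
    obtain ⟨e₃, he₃, hxe₃⟩ := hxN₃
    obtain ⟨f₁, hf₁, hyf₁⟩ := hyN₁
    obtain ⟨f₂, hf₂, hyf₂⟩ := hyN₂
    obtain ⟨f₃, hf₃, hyf₃⟩ := hyN₃
    refine ⟨C₁ ∪ {x}, C₂, C₃, {s₄}, Or.inl hc₁, hc₂, hc₃, rfl, ?_, ?_, ?_, hd23, ?_, ?_,
      pack _ c₁ (Or.inl hc₁) (connIn_union_singleton hR₁ hd₁ hxd₁),
      pack _ c₂ hc₂ hR₂, pack _ c₃ hc₃ hR₃,
      pack _ s₄ rfl (fun a ha b hb => by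
        simp at ha hb; subst ha; subst hb; exact reachIn_refl rfl), ?_, ?_, ?_, ?_, ?_⟩
    · rw [Set.disjoint_left]; rintro v (hv | hv) hv₂
      · exact Set.disjoint_left.mp hd12 hv hv₂
      · simp at hv; subst hv; exact hxC₂ hv₂
    · rw [Set.disjoint_left]; rintro v (hv | hv) hv₃
      · exact Set.disjoint_left.mp hd13 hv hv₃
      · simp at hv; subst hv; exact hxC₃ hv₃
    · rw [Set.disjoint_left]; rintro v (hv | hv) hv₄
      · simp at hv₄; subst hv₄; exact hyC₁ hv
      · simp at hv hv₄; subst hv hv₄; exact hxy rfl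
    · rw [Set.disjoint_left]; rintro v hv hv₄
      simp at hv₄; subst hv₄; exact hyC₂ hv
    · rw [Set.disjoint_left]; rintro v hv hv₄
      simp at hv₄; subst hv₄; exact hyC₃ hv
    · exact ⟨x, Or.inr rfl, e₂, he₂, hxe₂⟩
    · exact ⟨x, Or.inr rfl, e₃, he₃, hxe₃⟩
    · exact ⟨f₁, Or.inl hf₁, s₄, rfl, hyf₁.symm⟩
    · exact ⟨f₂, hf₂, s₄, rfl, hyf₂.symm⟩
    · exact ⟨f₃, hf₃, s₄, rfl, hyf₃.symm⟩
  -- s₄ lies in one of the components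
  have hs₄c₁ : s₄ ≠ c₁ := fun h => hs₄ (by simp [h])
  have hs₄c₂ : s₄ ≠ c₂ := fun h => hs₄ (by simp [h])
  have hs₄c₃ : s₄ ≠ c₃ := fun h => hs₄ (by simp [h])
  rcases hmemU hsx hsy with (hs₄C | hs₄C) | hs₄C
  · -- s₄ ∈ C₁
    obtain ⟨A, B, hU, hdisj, hAconn, hBconn, hcA, hsB, hor⟩ :=
      lemM h2 hxy hxC₁ hyC₁ hR₁ hclo₁ hyN₁ hc₁ hs₄C (Ne.symm hs₄c₁)
    obtain ⟨z, z', hzA, hz'B, hzN₂, hzN₃, hz'N₂, hz'N₃⟩ :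
        ∃ z z', z ∈ A ∧ z' ∈ B ∧ (∃ d ∈ C₂, H.Adj z d) ∧ (∃ d ∈ C₃, H.Adj z d) ∧
          (∃ d ∈ C₂, H.Adj z' d) ∧ (∃ d ∈ C₃, H.Adj z' d) := by
      rcases hor with ⟨h1, h2'⟩ | ⟨h1, h2'⟩
      · exact ⟨x, y, h1, h2', hxN₂, hxN₃, hyN₂, hyN₃⟩
      · exact ⟨y, x, h1, h2', hyN₂, hyN₃, hxN₂, hxN₃⟩
    have hAsub : ∀ a ∈ A, a ∈ C₁ ∨ a = x ∨ a = y := by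
      intro a ha
      have h := show a ∈ C₁ ∪ {x, y} by rw [← hU]; exact Or.inl ha
      rcases h with h | h
      · exact Or.inl h
      · exact Or.inr (by simpa using h)
    have hBsub : ∀ a ∈ B, a ∈ C₁ ∨ a = x ∨ a = y := by
      intro a ha
      have h := show a ∈ C₁ ∪ {x, y} by rw [← hU]; exact Or.inr ha
      rcases h with h | h
      · exact Or.inl h
      · exact Or.inr (by simpa using h)
    -- edge between A and B
    have hs₄A : s₄ ∉ A := fun h => Set.disjoint_left.mp hdisj h hsB
    obtain ⟨u, v, hadj, huS, hvS, hvP, hres⟩ := (hR₁ c₁ hc₁ s₄ hs₄C).firstCross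
      (P := Aᶜ) (by simpa using hcA) (by simpa using hs₄A)
    have huA : u ∈ A := by
      have := hres.mem_right; simp at this; exact this.2
    have hvB : v ∈ B := by
      have : v ∈ A ∪ B := by rw [hU]; exact Or.inl hvS
      rcases this with h | h
      · exact absurd h (by simpa using hvP)
      · exact h
    obtain ⟨d₂, hd₂, hzd₂⟩ := hzN₂
    obtain ⟨d₃, hd₃, hzd₃⟩ := hzN₃
    obtain ⟨e₂, he₂, hz'e₂⟩ := hz'N₂
    obtain ⟨e₃, he₃, hz'e₃⟩ := hz'N₃
    have hdA₂ : Disjoint A C₂ := by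
      rw [Set.disjoint_left]; intro a ha ha₂
      rcases hAsub a ha with h | h | h
      · exact Set.disjoint_left.mp hd12 h ha₂
      · exact hxC₂ (h ▸ ha₂)
      · exact hyC₂ (h ▸ ha₂)
    have hdA₃ : Disjoint A C₃ := by
      rw [Set.disjoint_left]; intro a ha ha₃
      rcases hAsub a ha with h | h | h
      · exact Set.disjoint_left.mp hd13 h ha₃
      · exact hxC₃ (h ▸ ha₃)
      · exact hyC₃ (h ▸ ha₃)
    have hdB₂ : Disjoint C₂ B := by
      rw [Set.disjoint_left]; intro a ha₂ ha
      rcases hBsub a ha with h | h | h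
      · exact Set.disjoint_left.mp hd12 h ha₂
      · exact hxC₂ (h ▸ ha₂)
      · exact hyC₂ (h ▸ ha₂)
    have hdB₃ : Disjoint C₃ B := by
      rw [Set.disjoint_left]; intro a ha₃ ha
      rcases hBsub a ha with h | h | h
      · exact Set.disjoint_left.mp hd13 h ha₃
      · exact hxC₃ (h ▸ ha₃)
      · exact hyC₃ (h ▸ ha₃)
    exact ⟨A, C₂, C₃, B, hcA, hc₂, hc₃, hsB, hdA₂, hdA₃, hdisj, hd23, hdB₂, hdB₃,
      pack _ c₁ hcA hAconn, pack _ c₂ hc₂ hR₂, pack _ c₃ hc₃ hR₃, pack _ s₄ hsB hBconn,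
      ⟨z, hzA, d₂, hd₂, hzd₂⟩, ⟨z, hzA, d₃, hd₃, hzd₃⟩, ⟨u, huA, v, hvB, hadj⟩,
      ⟨e₂, he₂, z', hz'B, hz'e₂.symm⟩, ⟨e₃, he₃, z', hz'B, hz'e₃.symm⟩⟩
  · -- s₄ ∈ C₂
    obtain ⟨A, B, hU, hdisj, hAconn, hBconn, hcA, hsB, hor⟩ :=
      lemM h2 hxy hxC₂ hyC₂ hR₂ hclo₂ hyN₂ hc₂ hs₄C (Ne.symm hs₄c₂)
    obtain ⟨z, z', hzA, hz'B, hzxy, hz'xy, hzN₁, hzN₃, hz'N₁, hz'N₃⟩ :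
        ∃ z z', z ∈ A ∧ z' ∈ B ∧ (z = x ∨ z = y) ∧ (z' = x ∨ z' = y) ∧
          (∃ d ∈ C₁, H.Adj z d) ∧ (∃ d ∈ C₃, H.Adj z d) ∧
          (∃ d ∈ C₁, H.Adj z' d) ∧ (∃ d ∈ C₃, H.Adj z' d) := by
      rcases hor with ⟨h1, h2'⟩ | ⟨h1, h2'⟩
      · exact ⟨x, y, h1, h2', Or.inl rfl, Or.inr rfl, hxN₁, hxN₃, hyN₁, hyN₃⟩
      · exact ⟨y, x, h1, h2', Or.inr rfl, Or.inl rfl, hyN₁, hyN₃, hxN₁, hxN₃⟩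
    have hzC₂ : z ∉ C₂ := by rcases hzxy with rfl | rfl; exacts [hxC₂, hyC₂]
    have hzC₁ : z ∉ C₁ := by rcases hzxy with rfl | rfl; exacts [hxC₁, hyC₁]
    have hzC₃ : z ∉ C₃ := by rcases hzxy with rfl | rfl; exacts [hxC₃, hyC₃]
    have hz'C₁ : z' ∉ C₁ := by rcases hz'xy with rfl | rfl; exacts [hxC₁, hyC₁]
    have hAsub : ∀ a ∈ A, a ∈ C₂ ∨ a = x ∨ a = y := by
      intro a ha
      have h := show a ∈ C₂ ∪ {x, y} by rw [← hU]; exact Or.inl ha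
      rcases h with h | h
      · exact Or.inl h
      · exact Or.inr (by simpa using h)
    have hBsub : ∀ a ∈ B, a ∈ C₂ ∨ a = x ∨ a = y := by
      intro a ha
      have h := show a ∈ C₂ ∪ {x, y} by rw [← hU]; exact Or.inr ha
      rcases h with h | h
      · exact Or.inl h
      · exact Or.inr (by simpa using h)
    have hDAB : C₂ ⊆ A ∪ B := by rw [hU]; exact Set.subset_union_left
    obtain ⟨A₀, hcA₀, hA₀A, hzAA₀, hA₀conn, ⟨p₁, hp₁, hp₁z⟩, ⟨p₂, hp₂, q₂, hq₂, hpq⟩, hhub⟩ :=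
      splitComp hAconn hR₂ hcA hc₂ hsB hs₄C hzA hzC₂ hdisj hDAB
    obtain ⟨d₁, hd₁, hzd₁⟩ := hzN₁
    obtain ⟨d₃, hd₃, hzd₃⟩ := hzN₃
    obtain ⟨e₁, he₁, hz'e₁⟩ := hz'N₁
    obtain ⟨e₃, he₃, hz'e₃⟩ := hz'N₃
    have hB₁conn : ConnIn H (C₁ ∪ (A \ A₀)) := by
      refine connIn_of_hub (z := z) (Or.inr hzAA₀) ?_
      intro w hw
      rcases hw with hw | hw
      · exact ((hR₁ w hw d₁ hd₁).mono Set.subset_union_left).trans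
          (reachIn_adj hzd₁.symm (Or.inl hd₁) (Or.inr hzAA₀))
      · exact (hhub w hw).mono Set.subset_union_right
    refine ⟨C₁ ∪ (A \ A₀), A₀, C₃, B, Or.inl hc₁, hcA₀, hc₃, hsB, ?_, ?_, ?_, ?_, ?_, ?_,
      pack _ c₁ (Or.inl hc₁) hB₁conn, pack _ c₂ hcA₀ hA₀conn, pack _ c₃ hc₃ hR₃,
      pack _ s₄ hsB hBconn,
      ⟨z, Or.inr hzAA₀, p₁, hp₁, hp₁z.symm⟩,
      ⟨z, Or.inr hzAA₀, d₃, hd₃, hzd₃⟩,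
      ⟨e₁, Or.inl he₁, z', hz'B, hz'e₁.symm⟩,
      ⟨p₂, hp₂, q₂, hq₂, hpq⟩,
      ⟨e₃, he₃, z', hz'B, hz'e₃.symm⟩⟩
    · rw [Set.disjoint_left]; rintro v (hv | hv) hv'
      · rcases hAsub v (hA₀A hv') with h | h | h
        · exact Set.disjoint_left.mp hd12 hv h
        · exact hxC₁ (h ▸ hv)
        · exact hyC₁ (h ▸ hv)
      · exact hv.2 hv'
    · rw [Set.disjoint_left]; rintro v (hv | hv) hv'
      · exact Set.disjoint_left.mp hd13 hv hv'
      · rcases hAsub v hv.1 with h | h | h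
        · exact Set.disjoint_left.mp hd23 h hv'
        · exact hxC₃ (h ▸ hv')
        · exact hyC₃ (h ▸ hv')
    · rw [Set.disjoint_left]; rintro v (hv | hv) hv'
      · rcases hBsub v hv' with h | h | h
        · exact Set.disjoint_left.mp hd12 hv h
        · exact hxC₁ (h ▸ hv)
        · exact hyC₁ (h ▸ hv)
      · exact Set.disjoint_left.mp hdisj hv.1 hv'
    · rw [Set.disjoint_left]; intro v hv hv'
      rcases hAsub v (hA₀A hv) with h | h | h
      · exact Set.disjoint_left.mp hd23 h hv'
      · exact hxC₃ (h ▸ hv')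
      · exact hyC₃ (h ▸ hv')
    · rw [Set.disjoint_left]; intro v hv hv'
      exact Set.disjoint_left.mp hdisj (hA₀A hv) hv'
    · rw [Set.disjoint_left]; intro v hv hv'
      rcases hBsub v hv' with h | h | h
      · exact Set.disjoint_left.mp hd23 h hv
      · exact hxC₃ (h ▸ hv)
      · exact hyC₃ (h ▸ hv)
  · -- s₄ ∈ C₃
    obtain ⟨A, B, hU, hdisj, hAconn, hBconn, hcA, hsB, hor⟩ :=
      lemM h2 hxy hxC₃ hyC₃ hR₃ hclo₃ hyN₃ hc₃ hs₄C (Ne.symm hs₄c₃)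
    obtain ⟨z, z', hzA, hz'B, hzxy, hz'xy, hzN₁, hzN₂, hz'N₁, hz'N₂⟩ :
        ∃ z z', z ∈ A ∧ z' ∈ B ∧ (z = x ∨ z = y) ∧ (z' = x ∨ z' = y) ∧
          (∃ d ∈ C₁, H.Adj z d) ∧ (∃ d ∈ C₂, H.Adj z d) ∧
          (∃ d ∈ C₁, H.Adj z' d) ∧ (∃ d ∈ C₂, H.Adj z' d) := by
      rcases hor with ⟨h1, h2'⟩ | ⟨h1, h2'⟩
      · exact ⟨x, y, h1, h2', Or.inl rfl, Or.inr rfl, hxN₁, hxN₂, hyN₁, hyN₂⟩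
      · exact ⟨y, x, h1, h2', Or.inr rfl, Or.inl rfl, hyN₁, hyN₂, hxN₁, hxN₂⟩
    have hzC₃ : z ∉ C₃ := by rcases hzxy with rfl | rfl; exacts [hxC₃, hyC₃]
    have hAsub : ∀ a ∈ A, a ∈ C₃ ∨ a = x ∨ a = y := by
      intro a ha
      have h := show a ∈ C₃ ∪ {x, y} by rw [← hU]; exact Or.inl ha
      rcases h with h | h
      · exact Or.inl h
      · exact Or.inr (by simpa using h)
    have hBsub : ∀ a ∈ B, a ∈ C₃ ∨ a = x ∨ a = y := by
      intro a ha
      have h := show a ∈ C₃ ∪ {x, y} by rw [← hU]; exact Or.inr ha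
      rcases h with h | h
      · exact Or.inl h
      · exact Or.inr (by simpa using h)
    have hDAB : C₃ ⊆ A ∪ B := by rw [hU]; exact Set.subset_union_left
    obtain ⟨A₀, hcA₀, hA₀A, hzAA₀, hA₀conn, ⟨p₁, hp₁, hp₁z⟩, ⟨p₂, hp₂, q₂, hq₂, hpq⟩, hhub⟩ :=
      splitComp hAconn hR₃ hcA hc₃ hsB hs₄C hzA hzC₃ hdisj hDAB
    obtain ⟨d₁, hd₁, hzd₁⟩ := hzN₁
    obtain ⟨d₂, hd₂, hzd₂⟩ := hzN₂
    obtain ⟨e₁, he₁, hz'e₁⟩ := hz'N₁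
    obtain ⟨e₂, he₂, hz'e₂⟩ := hz'N₂
    have hB₁conn : ConnIn H (C₁ ∪ (A \ A₀)) := by
      refine connIn_of_hub (z := z) (Or.inr hzAA₀) ?_
      intro w hw
      rcases hw with hw | hw
      · exact ((hR₁ w hw d₁ hd₁).mono Set.subset_union_left).trans
          (reachIn_adj hzd₁.symm (Or.inl hd₁) (Or.inr hzAA₀))
      · exact (hhub w hw).mono Set.subset_union_right
    refine ⟨C₁ ∪ (A \ A₀), C₂, A₀, B, Or.inl hc₁, hc₂, hcA₀, hsB, ?_, ?_, ?_, ?_, ?_, ?_,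
      pack _ c₁ (Or.inl hc₁) hB₁conn, pack _ c₂ hc₂ hR₂, pack _ c₃ hcA₀ hA₀conn,
      pack _ s₄ hsB hBconn,
      ⟨z, Or.inr hzAA₀, d₂, hd₂, hzd₂⟩,
      ⟨z, Or.inr hzAA₀, p₁, hp₁, hp₁z.symm⟩,
      ⟨e₁, Or.inl he₁, z', hz'B, hz'e₁.symm⟩,
      ⟨e₂, he₂, z', hz'B, hz'e₂.symm⟩,
      ⟨p₂, hp₂, q₂, hq₂, hpq⟩⟩
    · rw [Set.disjoint_left]; rintro v (hv | hv) hv'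
      · exact Set.disjoint_left.mp hd12 hv hv'
      · rcases hAsub v hv.1 with h | h | h
        · exact Set.disjoint_left.mp hd23 hv' h
        · exact hxC₂ (h ▸ hv')
        · exact hyC₂ (h ▸ hv')
    · rw [Set.disjoint_left]; rintro v (hv | hv) hv'
      · rcases hAsub v (hA₀A hv') with h | h | h
        · exact Set.disjoint_left.mp hd13 hv h
        · exact hxC₁ (h ▸ hv)
        · exact hyC₁ (h ▸ hv)
      · exact hv.2 hv'
    · rw [Set.disjoint_left]; rintro v (hv | hv) hv'
      · rcases hBsub v hv' with h | h | h
        · exact Set.disjoint_left.mp hd13 hv h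
        · exact hxC₁ (h ▸ hv)
        · exact hyC₁ (h ▸ hv)
      · exact Set.disjoint_left.mp hdisj hv.1 hv'
    · rw [Set.disjoint_left]; intro v hv hv'
      rcases hAsub v (hA₀A hv') with h | h | h
      · exact Set.disjoint_left.mp hd23 hv h
      · exact hxC₂ (h ▸ hv)
      · exact hyC₂ (h ▸ hv)
    · rw [Set.disjoint_left]; intro v hv hv'
      rcases hBsub v hv' with h | h | h
      · exact Set.disjoint_left.mp hd23 hv h
      · exact hxC₂ (h ▸ hv)
      · exact hyC₂ (h ▸ hv)
    · rw [Set.disjoint_left]; intro v hv hv'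
      exact Set.disjoint_left.mp hdisj (hA₀A hv) hv'
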